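/- arXiv:1312.3358 — 6 statements merged into one kernel-verified Lean document; each statement's English description precedes it below -/
import Mathlib

section
/- A nonzero symmetric traceless real 3×3 matrix Q satisfies 6·(tr Q³)² = |Q|⁶ if and only if Q is uniaxial, i.e., Q = s(n⊗n − I/3) for some real number s and some unit vector n ∈ ℝ³. -/
open Matrix

noncomputable section

/-- 3×3 real matrices. -/
abbrev Mat3 := Matrix (Fin 3) (Fin 3) ℝ

/-- `S₀`: symmetric traceless 3×3 real matrices. -/
def S0 (Q : Mat3) : Prop := Q.IsSymm ∧ Q.trace = 0

/-- `|Q|² = tr(Q²)`. -/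
def nsq (Q : Mat3) : ℝ := Matrix.trace (Q * Q)

/-- `tr Q³`. -/
def tr3 (Q : Mat3) : ℝ := Matrix.trace (Q * Q * Q)

/-- `n` is a unit vector in `ℝ³`. -/
def unitVec (n : Fin 3 → ℝ) : Prop := ∑ i, (n i) ^ 2 = 1

/-- The uniaxial tensor `s (n⊗n − I/3)`. -/
def uni (s : ℝ) (n : Fin 3 → ℝ) : Mat3 :=
  s • (Matrix.vecMulVec n n - (1 / 3 : ℝ) • (1 : Mat3))

lemma scalar_key (a b c d e f : ℝ)
    (e00 : a*a + d*d + e*e = a) (e11 : d*d + b*b + f*f = b) (e22 : e*e + f*f + c*c = c)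
    (e01 : a*d + d*b + e*f = d) (e02 : a*e + d*f + e*c = e) (e12 : d*e + b*f + f*c = f)
    (etr : a + b + c = 1) :
    ∃ x y z : ℝ, x^2+y^2+z^2 = 1 ∧ a = x*x ∧ d = x*y ∧ e = x*z ∧ b = y*y ∧ f = y*z ∧ c = z*z := by
  have hm1 : a*b - d*d = (a*b-d*d)^2 + (a*f-e*d)^2 + (d*f-e*b)^2 := by
    linear_combination (-b)*e00 - (a*a+d*d+e*e)*e11 + (d + (a*d+d*b+e*f))*e01
  have hm2 : a*c - e*e = (a*f-d*e)^2 + (a*c-e*e)^2 + (d*c-e*f)^2 := by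
    linear_combination (-c)*e00 - (a*a+d*d+e*e)*e22 + (e + (a*e+d*f+e*c))*e02
  have hm3 : b*c - f*f = (d*f-e*b)^2 + (d*c-e*f)^2 + (b*c-f*f)^2 := by
    linear_combination (-c)*e11 - (d*d+b*b+f*f)*e22 + (f + (d*e+b*f+f*c))*e12
  have hsum : (a*b - d*d) + (a*c - e*e) + (b*c - f*f) = 0 := by
    linear_combination ((a+b+c)/2)*etr - (1/2)*e00 - (1/2)*e11 - (1/2)*e22
  have hm1n : 0 ≤ a*b - d*d := by rw [hm1]; positivity
  have hm2n : 0 ≤ a*c - e*e := by rw [hm2]; positivity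
  have hm3n : 0 ≤ b*c - f*f := by rw [hm3]; positivity
  have hab : a*b = d*d := by linarith
  have hac : a*c = e*e := by linarith
  have hbc : b*c = f*f := by linarith
  have hanneg : 0 ≤ a := by nlinarith [sq_nonneg d, sq_nonneg e]
  have hbnneg : 0 ≤ b := by nlinarith [sq_nonneg d, sq_nonneg f]
  clear hm1 hm2 hm3 hm1n hm2n hm3n hsum
  rcases hanneg.lt_or_eq with hapos | ha0
  · -- a > 0
    have hane : a ≠ 0 := ne_of_gt hapos
    have haf : a*f = d*e := by
      have hsq : (a*f - d*e)^2 = 0 := by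
        linear_combination (a - (a*b - d*d))*hab + a^2*e11 - 2*a*d*e01 + d^2*e00
      have h0 := sq_eq_zero_iff.mp hsq
      linarith
    have hrpos : (0:ℝ) < Real.sqrt a := Real.sqrt_pos.mpr hapos
    have hrne : Real.sqrt a ≠ 0 := ne_of_gt hrpos
    have hr2 : Real.sqrt a * Real.sqrt a = a := Real.mul_self_sqrt hapos.le
    have hr2' : Real.sqrt a ^ 2 = a := by rw [sq]; exact hr2
    refine ⟨Real.sqrt a, d/Real.sqrt a, e/Real.sqrt a, ?_, hr2.symm, ?_, ?_, ?_, ?_, ?_⟩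
    · rw [div_pow, div_pow, hr2']
      field_simp
      linear_combination e00
    · rw [mul_div_cancel₀ _ hrne]
    · rw [mul_div_cancel₀ _ hrne]
    · rw [div_mul_div_comm, hr2, eq_div_iff hane]; linear_combination hab
    · rw [div_mul_div_comm, hr2, eq_div_iff hane]; linear_combination haf
    · rw [div_mul_div_comm, hr2, eq_div_iff hane]; linear_combination hac
  · -- a = 0
    have hde : d*d + e*e = 0 := by linear_combination e00 + (a-1)*ha0
    have hd0 : d = 0 := mul_self_eq_zero.mp
      (le_antisymm (by linarith [mul_self_nonneg e]) (mul_self_nonneg d))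
    have he0 : e = 0 := mul_self_eq_zero.mp
      (le_antisymm (by linarith [mul_self_nonneg d]) (mul_self_nonneg e))
    subst hd0; subst he0
    rcases hbnneg.lt_or_eq with hbpos | hb0
    · have hbne : b ≠ 0 := ne_of_gt hbpos
      have hrpos : (0:ℝ) < Real.sqrt b := Real.sqrt_pos.mpr hbpos
      have hrne : Real.sqrt b ≠ 0 := ne_of_gt hrpos
      have hr2 : Real.sqrt b * Real.sqrt b = b := Real.mul_self_sqrt hbpos.le
      have hr2' : Real.sqrt b ^ 2 = b := by rw [sq]; exact hr2
      refine ⟨0, Real.sqrt b, f/Real.sqrt b, ?_, by linarith, by simp, by simp,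
        hr2.symm, ?_, ?_⟩
      · rw [div_pow, hr2']
        field_simp
        linear_combination e11
      · rw [mul_div_cancel₀ _ hrne]
      · rw [div_mul_div_comm, hr2, eq_div_iff hbne]; linear_combination hbc
    · have hf2 : f*f = 0 := by linear_combination e11 + (b-1)*hb0
      have hf0 : f = 0 := mul_self_eq_zero.mp hf2
      have hc1 : c = 1 := by linarith
      exact ⟨0, 0, 1, by norm_num, by linarith, by simp, by simp, by linarith,
        by simp [hf0], by linarith⟩

lemma proj_rank_one (P : Mat3) (hs : P.IsSymm) (hP : P * P = P) (ht : P.trace = 1) :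
    ∃ n : Fin 3 → ℝ, unitVec n ∧ P = Matrix.vecMulVec n n := by
  have happ : ∀ i j, (P*P) i j = P i j := fun i j => by rw [hP]
  have h10 : P 1 0 = P 0 1 := hs.apply 0 1
  have h20 : P 2 0 = P 0 2 := hs.apply 0 2
  have h21 : P 2 1 = P 1 2 := hs.apply 1 2
  have e00 := happ 0 0
  have e11 := happ 1 1
  have e22 := happ 2 2
  have e01 := happ 0 1
  have e02 := happ 0 2
  have e12 := happ 1 2
  simp only [Matrix.mul_apply, Fin.sum_univ_three, h10, h20, h21] at e00 e11 e22 e01 e02 e12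
  have etr : P 0 0 + P 1 1 + P 2 2 = 1 := by
    have := ht; simp only [Matrix.trace, Matrix.diag, Fin.sum_univ_three] at this
    exact this
  obtain ⟨x, y, z, hu, hxx, hxy, hxz, hyy, hyz, hzz⟩ :=
    scalar_key (P 0 0) (P 1 1) (P 2 2) (P 0 1) (P 0 2) (P 1 2)
      (by linear_combination e00) (by linear_combination e11) (by linear_combination e22)
      (by linear_combination e01) (by linear_combination e02) (by linear_combination e12) etr
  refine ⟨![x, y, z], by simpa [unitVec, Fin.sum_univ_three] using hu, ?_⟩
  ext i j
  fin_cases i <;> fin_cases j <;>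
    simp [vecMulVec_apply, hxx, hxy, hxz, hyy, hyz, hzz, h10, h20, h21] <;> ring

lemma symm_sq_zero (N : Mat3) (hs : N.IsSymm) (h : N * N = 0) : N = 0 := by
  have htr : Matrix.trace (N*N) = 0 := by rw [h]; simp
  have h10 : N 1 0 = N 0 1 := hs.apply 0 1
  have h20 : N 2 0 = N 0 2 := hs.apply 0 2
  have h21 : N 2 1 = N 1 2 := hs.apply 1 2
  simp only [Matrix.trace, Matrix.diag, Matrix.mul_apply, Fin.sum_univ_three,
    h10, h20, h21] at htr
  have q00 : N 0 0 = 0 := mul_self_eq_zero.mp (le_antisymm (by linarith [mul_self_nonneg (N 0 1), mul_self_nonneg (N 0 2), mul_self_nonneg (N 1 1), mul_self_nonneg (N 1 2), mul_self_nonneg (N 2 2)]) (mul_self_nonneg _))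
  have q11 : N 1 1 = 0 := mul_self_eq_zero.mp (le_antisymm (by linarith [mul_self_nonneg (N 0 1), mul_self_nonneg (N 0 2), mul_self_nonneg (N 0 0), mul_self_nonneg (N 1 2), mul_self_nonneg (N 2 2)]) (mul_self_nonneg _))
  have q22 : N 2 2 = 0 := mul_self_eq_zero.mp (le_antisymm (by linarith [mul_self_nonneg (N 0 1), mul_self_nonneg (N 0 2), mul_self_nonneg (N 0 0), mul_self_nonneg (N 1 2), mul_self_nonneg (N 1 1)]) (mul_self_nonneg _))
  have q01 : N 0 1 = 0 := mul_self_eq_zero.mp (le_antisymm (by linarith [mul_self_nonneg (N 0 0), mul_self_nonneg (N 0 2), mul_self_nonneg (N 1 1), mul_self_nonneg (N 1 2), mul_self_nonneg (N 2 2)]) (mul_self_nonneg _))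
  have q02 : N 0 2 = 0 := mul_self_eq_zero.mp (le_antisymm (by linarith [mul_self_nonneg (N 0 0), mul_self_nonneg (N 0 1), mul_self_nonneg (N 1 1), mul_self_nonneg (N 1 2), mul_self_nonneg (N 2 2)]) (mul_self_nonneg _))
  have q12 : N 1 2 = 0 := mul_self_eq_zero.mp (le_antisymm (by linarith [mul_self_nonneg (N 0 0), mul_self_nonneg (N 0 1), mul_self_nonneg (N 1 1), mul_self_nonneg (N 0 2), mul_self_nonneg (N 2 2)]) (mul_self_nonneg _))
  ext i j
  fin_cases i <;> fin_cases j <;> simp [q00, q11, q22, q01, q02, q12, h10, h20, h21]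

lemma cayley (Q : Mat3) (htr : Q.trace = 0) :
    Q*Q*Q = (nsq Q/2) • Q + (tr3 Q/3) • (1:Mat3) := by
  have h22 : Q 2 2 = -Q 0 0 - Q 1 1 := by
    have := htr; simp only [Matrix.trace, Matrix.diag, Fin.sum_univ_three] at this; linarith
  ext i j
  fin_cases i <;> fin_cases j <;>
    simp [nsq, tr3, Matrix.trace, Matrix.diag, Matrix.mul_apply, Fin.sum_univ_three,
      Matrix.one_apply, h22] <;> ring

lemma uni_nsq (s : ℝ) (n : Fin 3 → ℝ) (hn : unitVec n) : nsq (uni s n) = 2/3 * s^2 := by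
  have h : n 0 ^2 + n 1 ^2 + n 2^2 = 1 := by simpa [unitVec, Fin.sum_univ_three] using hn
  simp only [nsq, uni, Matrix.trace, Matrix.diag, Fin.sum_univ_three, Matrix.mul_apply,
    Matrix.smul_apply, Matrix.sub_apply, vecMulVec_apply, Matrix.one_apply, smul_eq_mul,
    Fin.reduceEq, if_true, if_false, eq_self_iff_true]
  linear_combination (s^2*(n 0^2+n 1^2+n 2^2+1/3)) * h

lemma uni_tr3 (s : ℝ) (n : Fin 3 → ℝ) (hn : unitVec n) : tr3 (uni s n) = 2/9 * s^3 := by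
  have h : n 0 ^2 + n 1 ^2 + n 2^2 = 1 := by simpa [unitVec, Fin.sum_univ_three] using hn
  simp only [tr3, uni, Matrix.trace, Matrix.diag, Fin.sum_univ_three, Matrix.mul_apply,
    Matrix.smul_apply, Matrix.sub_apply, vecMulVec_apply, Matrix.one_apply, smul_eq_mul,
    Fin.reduceEq, if_true, if_false, eq_self_iff_true]
  linear_combination (s^3*((n 0^2+n 1^2+n 2^2)^2 + 1/3)) * h

theorem stmt1 (Q : Mat3) (hQ : S0 Q) (hne : Q ≠ 0) :
    6 * (tr3 Q) ^ 2 = (nsq Q) ^ 3 ↔ ∃ (s : ℝ) (n : Fin 3 → ℝ), unitVec n ∧ Q = uni s n := by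
  obtain ⟨hsymm, htr⟩ := hQ
  constructor
  · intro hyp
    -- positivity of nsq
    have h10 : Q 1 0 = Q 0 1 := hsymm.apply 0 1
    have h20 : Q 2 0 = Q 0 2 := hsymm.apply 0 2
    have h21 : Q 2 1 = Q 1 2 := hsymm.apply 1 2
    have hnsq : nsq Q = Q 0 0^2 + Q 1 1^2 + Q 2 2^2 + 2*Q 0 1^2 + 2*Q 0 2^2 + 2*Q 1 2^2 := by
      simp only [nsq, Matrix.trace, Matrix.diag, Matrix.mul_apply, Fin.sum_univ_three,
        h10, h20, h21]
      ring
    have ht2pos : 0 < nsq Q := by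
      rcases (by positivity : (0:ℝ) ≤ Q 0 0^2 + Q 1 1^2 + Q 2 2^2 + 2*Q 0 1^2 + 2*Q 0 2^2 + 2*Q 1 2^2).lt_or_eq with h | h
      · rw [hnsq]; exact h
      · exfalso; apply hne
        have q00 : Q 0 0 = 0 := pow_eq_zero_iff two_ne_zero |>.mp (le_antisymm (by linarith [sq_nonneg (Q 0 1), sq_nonneg (Q 0 2), sq_nonneg (Q 1 1), sq_nonneg (Q 1 2), sq_nonneg (Q 2 2)]) (sq_nonneg _))
        have q11 : Q 1 1 = 0 := pow_eq_zero_iff two_ne_zero |>.mp (le_antisymm (by linarith [sq_nonneg (Q 0 1), sq_nonneg (Q 0 2), sq_nonneg (Q 0 0), sq_nonneg (Q 1 2), sq_nonneg (Q 2 2)]) (sq_nonneg _))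
        have q22 : Q 2 2 = 0 := pow_eq_zero_iff two_ne_zero |>.mp (le_antisymm (by linarith [sq_nonneg (Q 0 1), sq_nonneg (Q 0 2), sq_nonneg (Q 0 0), sq_nonneg (Q 1 2), sq_nonneg (Q 1 1)]) (sq_nonneg _))
        have q01 : Q 0 1 = 0 := pow_eq_zero_iff two_ne_zero |>.mp (le_antisymm (by linarith [sq_nonneg (Q 0 0), sq_nonneg (Q 0 2), sq_nonneg (Q 1 1), sq_nonneg (Q 1 2), sq_nonneg (Q 2 2)]) (sq_nonneg _))
        have q02 : Q 0 2 = 0 := pow_eq_zero_iff two_ne_zero |>.mp (le_antisymm (by linarith [sq_nonneg (Q 0 0), sq_nonneg (Q 0 1), sq_nonneg (Q 1 1), sq_nonneg (Q 1 2), sq_nonneg (Q 2 2)]) (sq_nonneg _))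
        have q12 : Q 1 2 = 0 := pow_eq_zero_iff two_ne_zero |>.mp (le_antisymm (by linarith [sq_nonneg (Q 0 0), sq_nonneg (Q 0 1), sq_nonneg (Q 1 1), sq_nonneg (Q 0 2), sq_nonneg (Q 2 2)]) (sq_nonneg _))
        ext i j
        fin_cases i <;> fin_cases j <;> simp [q00, q11, q22, q01, q02, q12, h10, h20, h21]
    have ht2ne : nsq Q ≠ 0 := ne_of_gt ht2pos
    have ht3ne : tr3 Q ≠ 0 := by
      intro h0
      apply ht2ne
      have h3 : nsq Q ^ 3 = 0 := by rw [← hyp, h0]; ring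
      exact pow_eq_zero_iff three_ne_zero |>.mp h3
    set s : ℝ := 3 * tr3 Q / nsq Q with hs
    have hsne : s ≠ 0 := by
      rw [hs]; exact div_ne_zero (by positivity) ht2ne
    have hs2 : s^2 = 3 * nsq Q / 2 := by
      rw [hs, div_pow, div_eq_iff (pow_ne_zero 2 ht2ne)]; linear_combination (3/2 : ℝ) * hyp
    have hs3 : s^3 = 9 * tr3 Q / 2 := by
      rw [hs, div_pow, div_eq_iff (pow_ne_zero 3 ht2ne)]; linear_combination (9/2 * tr3 Q) * hyp
    have hCH := cayley Q htr
    set N : Mat3 := Q*Q - (s/3)•Q - (2*s^2/9)•1 with hNdef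
    have hAN : (Q + (s/3)•1) * N = 0 := by
      have hid : (Q + (s/3)•1) * N = Q*Q*Q - (s^2/3)•Q - (2*s^3/27)•(1:Mat3) := by
        rw [hNdef]
        simp only [add_mul, mul_add, sub_mul, mul_sub, smul_mul_assoc, mul_smul_comm, smul_smul,
          mul_one, one_mul, mul_assoc]
        match_scalars <;> ring
      rw [hid, hCH]
      match_scalars
      · field_simp; linarith [hs2]
      · field_simp; linarith [hs3]
    have hNsymm : N.IsSymm := by
      rw [Matrix.IsSymm, hNdef]
      simp only [Matrix.transpose_sub, Matrix.transpose_smul, Matrix.transpose_mul,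
        Matrix.transpose_one, hsymm.eq]
    have hNN : N * N = 0 := by
      have h2 : N = (Q - (2*s/3)•1) * (Q + (s/3)•1) := by
        rw [hNdef]
        simp only [add_mul, mul_add, sub_mul, mul_sub, smul_mul_assoc, mul_smul_comm, smul_smul,
          mul_one, one_mul, mul_assoc]
        match_scalars <;> ring
      have h3 : N * N = ((Q - (2*s/3)•1) * (Q + (s/3)•1)) * N := by rw [← h2]
      rw [h3, mul_assoc, hAN, mul_zero]
    have hN0 : N = 0 := symm_sq_zero N hNsymm hNN
    have hQ2 : Q*Q = (s/3)•Q + (2*s^2/9)•(1:Mat3) := by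
      have := hN0
      rw [hNdef, sub_sub, sub_eq_zero] at this
      exact this
    set P : Mat3 := s⁻¹ • (Q + (s/3)•1) with hPdef
    have hPsymm : P.IsSymm := by
      rw [Matrix.IsSymm, hPdef]
      simp only [Matrix.transpose_smul, Matrix.transpose_add, Matrix.transpose_one, hsymm.eq]
    have hPtrace : P.trace = 1 := by
      rw [hPdef]
      simp only [Matrix.trace_smul, Matrix.trace_add, Matrix.trace_one, htr, smul_eq_mul]
      field_simp; simp
    have hPP : P * P = P := by
      have hexp : (Q + (s/3)•1) * (Q + (s/3)•1) = Q*Q + (2*s/3)•Q + (s^2/9)•(1:Mat3) := by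
        simp only [add_mul, mul_add, smul_mul_assoc, mul_smul_comm, smul_smul, mul_one, one_mul]
        match_scalars <;> ring
      have h4 : P * P = (s⁻¹*s⁻¹) • ((Q + (s/3)•1) * (Q + (s/3)•1)) := by
        rw [hPdef, smul_mul_assoc, mul_smul_comm, smul_smul]
      rw [h4, hexp, hQ2, hPdef]
      match_scalars <;> field_simp <;> ring
    obtain ⟨n, hn, hPn⟩ := proj_rank_one P hPsymm hPP hPtrace
    refine ⟨s, n, hn, ?_⟩
    rw [uni, ← hPn, hPdef]
    match_scalars <;> field_simp <;> ring
  · rintro ⟨s, n, hn, rfl⟩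
    rw [uni_nsq s n hn, uni_tr3 s n hn]
    ring

end
end

section
/- For every symmetric traceless real 3×3 matrix Q, the elementary inequality 0 ≤ |Q|³ − √6·tr Q³ ≤ ((3 − sgn(tr Q³))/2)·|Q|³ holds; in particular |Q|³ − √6·tr Q³ ≤ 2|Q|³, and if tr Q³ ≥ 0 then |Q|³ − √6·tr Q³ ≤ |Q|³. -/
open Matrix

noncomputable section

/-- Frobenius norm `|Q| = √(nsq Q)`. -/
def normQ (Q : Mat3) : ℝ := Real.sqrt (nsq Q)

lemma trace_powers (Q : Mat3) (h : Q.IsHermitian) :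
    Matrix.trace (Q * Q * Q) = ∑ i, (h.eigenvalues i)^3 ∧
    Matrix.trace (Q * Q) = ∑ i, (h.eigenvalues i)^2 ∧
    Matrix.trace Q = ∑ i, h.eigenvalues i := by
  set U : Matrix (Fin 3) (Fin 3) ℝ := (h.eigenvectorUnitary : Matrix (Fin 3) (Fin 3) ℝ) with hUdef
  set D : Matrix (Fin 3) (Fin 3) ℝ := Matrix.diagonal (RCLike.ofReal ∘ h.eigenvalues) with hD
  have hQ : Q = U * D * star U := h.spectral_theorem
  have h1 : star U * U = 1 := h.eigenvectorUnitary.prop.1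
  have key : ∀ M : Matrix (Fin 3) (Fin 3) ℝ, Matrix.trace (U * M * star U) = Matrix.trace M := by
    intro M
    rw [Matrix.trace_mul_comm, ← Matrix.mul_assoc, h1, Matrix.one_mul]
  have e3 : Q * Q * Q = U * (D * D * D) * star U := by
    rw [hQ]
    calc U * D * star U * (U * D * star U) * (U * D * star U)
        = U * D * (star U * U) * D * (star U * U) * D * star U := by
          simp only [Matrix.mul_assoc]
      _ = U * (D * D * D) * star U := by rw [h1]; simp only [Matrix.mul_one, Matrix.mul_assoc]
  have e2 : Q * Q = U * (D * D) * star U := by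
    rw [hQ]
    calc U * D * star U * (U * D * star U)
        = U * D * (star U * U) * D * star U := by simp only [Matrix.mul_assoc]
      _ = U * (D * D) * star U := by rw [h1]; simp only [Matrix.mul_one, Matrix.mul_assoc]
  refine ⟨?_, ?_, ?_⟩
  · rw [e3, key, hD, Matrix.diagonal_mul_diagonal, Matrix.diagonal_mul_diagonal,
      Matrix.trace_diagonal]
    simp [pow_succ, mul_assoc]
  · rw [e2, key, hD, Matrix.diagonal_mul_diagonal, Matrix.trace_diagonal]
    simp [sq]
  · conv_lhs => rw [hQ]
    rw [key, hD, Matrix.trace_diagonal]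
    simp

lemma eig_ineq (a b c : ℝ) (h : a + b + c = 0) :
    6 * (a^3 + b^3 + c^3)^2 ≤ (a^2 + b^2 + c^2)^3 := by
  have hc : c = -a - b := by linarith
  subst hc
  nlinarith [sq_nonneg ((a - b) * (2*a + b) * (a + 2*b)), sq_nonneg (a - b), sq_nonneg (a + b),
    sq_nonneg a, sq_nonneg b]

theorem stmt2 (Q : Mat3) (hQ : S0 Q) :
    0 ≤ (normQ Q) ^ 3 - Real.sqrt 6 * tr3 Q ∧
    (normQ Q) ^ 3 - Real.sqrt 6 * tr3 Q ≤ ((3 - Real.sign (tr3 Q)) / 2) * (normQ Q) ^ 3 ∧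
    (normQ Q) ^ 3 - Real.sqrt 6 * tr3 Q ≤ 2 * (normQ Q) ^ 3 ∧
    (0 ≤ tr3 Q → (normQ Q) ^ 3 - Real.sqrt 6 * tr3 Q ≤ (normQ Q) ^ 3) := by
  have hherm : Q.IsHermitian := by
    rw [Matrix.IsHermitian, conjTranspose_eq_transpose_of_trivial]; exact hQ.1
  obtain ⟨h3, h2, h1⟩ := trace_powers Q hherm
  set lam := hherm.eigenvalues
  have hsum : lam 0 + lam 1 + lam 2 = 0 := by
    have := hQ.2
    rw [h1, Fin.sum_univ_three] at this
    exact this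
  have ht3 : tr3 Q = (lam 0)^3 + (lam 1)^3 + (lam 2)^3 := by
    rw [tr3, h3, Fin.sum_univ_three]
  have hnsq : nsq Q = (lam 0)^2 + (lam 1)^2 + (lam 2)^2 := by
    rw [nsq, h2, Fin.sum_univ_three]
  have hs0 : 0 ≤ nsq Q := by rw [hnsq]; positivity
  have hkey : 6 * (tr3 Q)^2 ≤ (nsq Q)^3 := by
    rw [ht3, hnsq]; exact eig_ineq _ _ _ hsum
  set t := tr3 Q
  set n3 := (normQ Q)^3 with hn3def
  have hn3nonneg : 0 ≤ n3 := by
    rw [hn3def, normQ]; positivity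
  have hn3sq : n3^2 = (nsq Q)^3 := by
    rw [hn3def, normQ, ← pow_mul, show 3*2 = 2*3 by ring, pow_mul, Real.sq_sqrt hs0]
  -- main bound : √6 * |t| ≤ n3
  have hB : Real.sqrt 6 * |t| ≤ n3 := by
    have h6 : (Real.sqrt 6 * |t|)^2 = 6 * t^2 := by
      rw [mul_pow, Real.sq_sqrt (by norm_num : (6:ℝ) ≥ 0), sq_abs]
    have hsq : (Real.sqrt 6 * |t|)^2 ≤ n3^2 := by rw [h6, hn3sq]; exact hkey
    have habs : 0 ≤ Real.sqrt 6 * |t| := by positivity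
    nlinarith [hsq, habs, hn3nonneg]
  have hst : Real.sqrt 6 * t ≤ n3 := by
    calc Real.sqrt 6 * t ≤ Real.sqrt 6 * |t| :=
          mul_le_mul_of_nonneg_left (le_abs_self t) (Real.sqrt_nonneg 6)
      _ ≤ n3 := hB
  have hst' : -n3 ≤ Real.sqrt 6 * t := by
    have : Real.sqrt 6 * (-t) ≤ Real.sqrt 6 * |t| :=
      mul_le_mul_of_nonneg_left (neg_le_abs t) (Real.sqrt_nonneg 6)
    nlinarith [hB]
  refine ⟨by linarith, ?_, by linarith, fun ht => ?_⟩
  · rcases lt_trichotomy t 0 with hlt | heq | hgt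
    · rw [Real.sign_of_neg hlt]
      have : -(Real.sqrt 6 * t) ≤ n3 := by linarith
      linarith
    · rw [heq, Real.sign_zero]
      simp only [mul_zero, sub_zero]
      linarith
    · rw [Real.sign_of_pos hgt]
      have : 0 ≤ Real.sqrt 6 * t := by positivity
      linarith
  · have : 0 ≤ Real.sqrt 6 * t := mul_nonneg (Real.sqrt_nonneg 6) ht
    linarith
end
end

section
/- For every ε₁ ∈ (0,1) and every symmetric traceless real 3×3 matrix Q with 1 − ε₁ ≤ |Q| ≤ 1 and 0 ≤ |Q|³ − √6·tr Q³ ≤ ε₁, the biaxiality parameter satisfies β²(Q) ≤ 2ε₁/(1 − ε₁)³. In particular β²(Q) → 0 as ε₁ → 0, uniformly over such Q. -/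
open Matrix

noncomputable section

/-- The biaxiality parameter `β²(Q) = 1 − 6(tr Q³)²/|Q|⁶`. -/
def betaSq (Q : Mat3) : ℝ := 1 - 6 * (tr3 Q) ^ 2 / (nsq Q) ^ 3

theorem stmt3 :
    (∀ ε₁ ∈ Set.Ioo (0 : ℝ) 1, ∀ Q : Mat3, S0 Q →
      1 - ε₁ ≤ normQ Q → normQ Q ≤ 1 →
      0 ≤ (normQ Q) ^ 3 - Real.sqrt 6 * tr3 Q →
      (normQ Q) ^ 3 - Real.sqrt 6 * tr3 Q ≤ ε₁ →
      betaSq Q ≤ 2 * ε₁ / (1 - ε₁) ^ 3) ∧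
    Filter.Tendsto (fun ε₁ : ℝ => 2 * ε₁ / (1 - ε₁) ^ 3)
      (nhdsWithin 0 (Set.Ioi 0)) (nhds 0) := by
  constructor
  · rintro ε₁ ⟨hε0, hε1⟩ Q ⟨hsymm, htr⟩ hlo hhi hA0 hAε
    have hsym : ∀ i j, Q j i = Q i j := fun i j => congr_fun (congr_fun hsymm i) j
    have hnsq : nsq Q = ∑ i, ∑ j, Q i j ^ 2 := by
      simp only [nsq, Matrix.trace, Matrix.diag, Matrix.mul_apply]
      refine Finset.sum_congr rfl fun i _ => Finset.sum_congr rfl fun j _ => ?_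
      rw [hsym i j]; ring
    have hnn : 0 ≤ nsq Q := by rw [hnsq]; positivity
    set n := normQ Q with hn
    set t := tr3 Q with ht
    have hn2 : n ^ 2 = nsq Q := Real.sq_sqrt hnn
    have h1ε : (0:ℝ) < 1 - ε₁ := by linarith
    have hnpos : 0 < n := lt_of_lt_of_le h1ε hlo
    have h6 : Real.sqrt 6 ^ 2 = 6 := Real.sq_sqrt (by norm_num)
    have hprod : (n ^ 3 - Real.sqrt 6 * t) * (n ^ 3 + Real.sqrt 6 * t) = n ^ 6 - 6 * t ^ 2 := by
      linear_combination (-t ^ 2) * h6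
    have hbeta : betaSq Q = ((n ^ 3 - Real.sqrt 6 * t) * (n ^ 3 + Real.sqrt 6 * t)) / n ^ 6 := by
      rw [betaSq, ← hn2, ← ht, hprod]
      have hne : n ≠ 0 := ne_of_gt hnpos
      field_simp
    set A := n ^ 3 - Real.sqrt 6 * t with hA
    set B := n ^ 3 + Real.sqrt 6 * t with hB
    have hn3pos : 0 < n ^ 3 := by positivity
    have hn31 : n ^ 3 ≤ 1 := by nlinarith
    have hkey : A * B ≤ 2 * ε₁ * n ^ 3 := by
      rcases le_or_gt B 0 with hB0 | hB0
      · have : A * B ≤ 0 := mul_nonpos_of_nonneg_of_nonpos hA0 hB0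
        nlinarith
      · have hB2 : B ≤ 2 * n ^ 3 := by nlinarith
        calc A * B ≤ ε₁ * B := by nlinarith
          _ ≤ ε₁ * (2 * n ^ 3) := by nlinarith
          _ = 2 * ε₁ * n ^ 3 := by ring
    have hlo3 : (1 - ε₁) ^ 3 ≤ n ^ 3 := pow_le_pow_left₀ (le_of_lt h1ε) hlo 3
    calc betaSq Q = A * B / n ^ 6 := hbeta
      _ ≤ 2 * ε₁ * n ^ 3 / n ^ 6 := by gcongr
      _ = 2 * ε₁ / n ^ 3 := by
          rw [eq_div_iff (by positivity)]
          field_simp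
      _ ≤ 2 * ε₁ / (1 - ε₁) ^ 3 := by
          have h2e : (0:ℝ) ≤ 2 * ε₁ := by linarith
          exact div_le_div_of_nonneg_left h2e (by positivity) hlo3
  · have hc : ContinuousAt (fun ε₁ : ℝ => 2 * ε₁ / (1 - ε₁) ^ 3) 0 := by
      apply ContinuousAt.div (by fun_prop) (by fun_prop)
      norm_num
    have h0 : (fun ε₁ : ℝ => 2 * ε₁ / (1 - ε₁) ^ 3) 0 = 0 := by norm_num
    have ht := hc.tendsto.mono_left
      (nhdsWithin_le_nhds : nhdsWithin (0 : ℝ) (Set.Ioi 0) ≤ nhds 0)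
    simpa using ht
end
end

section
/- Let A < 0, B > 0, C > 0 and define f_B(Q) = (A/2)tr Q² − (B/3)tr Q³ + (C/4)(tr Q²)² on symmetric traceless 3×3 matrices. Then f_B attains its minimum over S₀ exactly on the set of matrices Q = s₊(n⊗n − I/3) with n a unit vector, where s₊ = (B + √(B² + 24|A|C))/(4C). -/
open Matrix

noncomputable section

/-- The bulk potential `f_B(Q) = (A/2)tr Q² − (B/3)tr Q³ + (C/4)(tr Q²)²`. -/
def fB (A B C : ℝ) (Q : Mat3) : ℝ :=
  A / 2 * nsq Q - B / 3 * tr3 Q + C / 4 * (nsq Q) ^ 2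

lemma uni_S0 (s : ℝ) {n : Fin 3 → ℝ} (hn : unitVec n) : S0 (uni s n) := by
  have h := hn
  rw [unitVec, Fin.sum_univ_three] at h
  constructor
  · refine Matrix.IsSymm.smul (Matrix.IsSymm.sub ?_ (Matrix.isSymm_one.smul _)) s
    ext i j
    simp [Matrix.transpose_apply, vecMulVec_apply, mul_comm]
  · rw [Matrix.trace, Fin.sum_univ_three]
    simp [uni, Matrix.diag, vecMulVec_apply, Matrix.one_apply]
    linear_combination s * h

lemma nsq_uni (s : ℝ) {n : Fin 3 → ℝ} (hn : unitVec n) : nsq (uni s n) = 2*s^2/3 := by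
  have h := hn
  rw [unitVec, Fin.sum_univ_three] at h
  simp [nsq, uni, Matrix.trace, Matrix.diag, Matrix.mul_apply, Fin.sum_univ_three,
    vecMulVec_apply, Matrix.one_apply]
  linear_combination (s^2*((n 0^2+n 1^2+n 2^2) + 1/3)) * h

lemma tr3_uni (s : ℝ) {n : Fin 3 → ℝ} (hn : unitVec n) : tr3 (uni s n) = 2*s^3/9 := by
  have h := hn
  rw [unitVec, Fin.sum_univ_three] at h
  simp [tr3, uni, Matrix.trace, Matrix.diag, Matrix.mul_apply, Fin.sum_univ_three,
    vecMulVec_apply, Matrix.one_apply]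
  linear_combination (s^3*((n 0^2+n 1^2+n 2^2)^2 + 1/3)) * h

lemma conjMul3 {U sU D E : Mat3} (h : sU * U = 1) : (U*D*sU) * (U*E*sU) = U*(D*E)*sU := by
  calc (U*D*sU) * (U*E*sU) = U*(D*((sU*U)*(E*sU))) := by simp only [Matrix.mul_assoc]
  _ = U*(D*E)*sU := by rw [h, Matrix.one_mul]; simp only [Matrix.mul_assoc]

lemma traceConj3 {U sU X : Mat3} (h : sU * U = 1) : Matrix.trace (U*X*sU) = Matrix.trace X := by
  rw [Matrix.trace_mul_comm, ← Matrix.mul_assoc, h, Matrix.one_mul]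

lemma spec_facts {Q : Mat3} (hH : Q.IsHermitian) :
    Q = (hH.eigenvectorUnitary : Mat3) * Matrix.diagonal hH.eigenvalues
        * star (hH.eigenvectorUnitary : Mat3) ∧
    star (hH.eigenvectorUnitary : Mat3) * (hH.eigenvectorUnitary : Mat3) = 1 ∧
    (hH.eigenvectorUnitary : Mat3) * star (hH.eigenvectorUnitary : Mat3) = 1 := by
  refine ⟨?_, Matrix.mem_unitaryGroup_iff'.mp (hH.eigenvectorUnitary).2,
    Matrix.mem_unitaryGroup_iff.mp (hH.eigenvectorUnitary).2⟩
  have := hH.spectral_theorem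
  simpa [RCLike.ofReal_real_eq_id, Function.id_comp] using this

lemma trace_sums {Q : Mat3} (hH : Q.IsHermitian) :
    Matrix.trace Q = hH.eigenvalues 0 + hH.eigenvalues 1 + hH.eigenvalues 2 ∧
    nsq Q = hH.eigenvalues 0^2 + hH.eigenvalues 1^2 + hH.eigenvalues 2^2 ∧
    tr3 Q = hH.eigenvalues 0^3 + hH.eigenvalues 1^3 + hH.eigenvalues 2^3 := by
  obtain ⟨hspec, hsU, hUs⟩ := spec_facts hH
  refine ⟨?_, ?_, ?_⟩
  · conv_lhs => rw [hspec]
    rw [traceConj3 hsU, Matrix.trace_diagonal, Fin.sum_univ_three]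
  · rw [nsq]; conv_lhs => rw [hspec]
    rw [ conjMul3 hsU, Matrix.diagonal_mul_diagonal, traceConj3 hsU,
      Matrix.trace_diagonal, Fin.sum_univ_three]
    ring
  · rw [tr3]; conv_lhs => rw [hspec]
    rw [conjMul3 hsU, conjMul3 hsU, Matrix.diagonal_mul_diagonal,
      Matrix.diagonal_mul_diagonal, traceConj3 hsU, Matrix.trace_diagonal, Fin.sum_univ_three]
    ring

lemma reconstruct {Q : Mat3} (hH : Q.IsHermitian) {P : ℝ} (i : Fin 3)
    (hi : hH.eigenvalues i = 2*P/3) (hj : ∀ j, j ≠ i → hH.eigenvalues j = -(P/3)) :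
    ∃ n, unitVec n ∧ Q = uni P n := by
  obtain ⟨hspec, hsU, hUs⟩ := spec_facts hH
  set U : Mat3 := (hH.eigenvectorUnitary : Mat3) with hUdef
  set d : Fin 3 → ℝ := hH.eigenvalues with hddef
  refine ⟨fun k => U k i, ?_, ?_⟩
  · have h := congrFun (congrFun hsU i) i
    rw [Matrix.mul_apply, Fin.sum_univ_three] at h
    simp only [Matrix.star_apply, star_trivial, Matrix.one_apply_eq] at h
    rw [unitVec, Fin.sum_univ_three]
    linear_combination h
  · ext k l
    have hone : U k 0 * U l 0 + U k 1 * U l 1 + U k 2 * U l 2 = (1:Mat3) k l := by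
      have h := congrFun (congrFun hUs k) l
      rw [Matrix.mul_apply, Fin.sum_univ_three] at h
      simpa only [Matrix.star_apply, star_trivial] using h
    have hQkl : Q k l = U k 0 * d 0 * U l 0 + U k 1 * d 1 * U l 1 + U k 2 * d 2 * U l 2 := by
      conv_lhs => rw [hspec]
      rw [Matrix.mul_apply, Fin.sum_univ_three]
      simp only [Matrix.mul_diagonal, Matrix.star_apply, star_trivial]
    have huni : uni P (fun k => U k i) k l = P * (U k i * U l i) - P/3 * (1:Mat3) k l := by
      simp only [uni, Matrix.smul_apply, Matrix.sub_apply, vecMulVec_apply, smul_eq_mul]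
      ring
    rw [hQkl, huni]
    fin_cases i <;>
      simp only [Fin.isValue, Fin.zero_eta, Fin.mk_one, Fin.reduceFinMk] at hi hj huni ⊢
    · rw [show d 0 = 2*P/3 from hi, hj 1 (by decide), hj 2 (by decide)]
      linear_combination (-(P/3)) * hone
    · rw [show d 1 = 2*P/3 from hi, hj 0 (by decide), hj 2 (by decide)]
      linear_combination (-(P/3)) * hone
    · rw [show d 2 = 2*P/3 from hi, hj 0 (by decide), hj 1 (by decide)]
      linear_combination (-(P/3)) * hone


lemma quartic_le {A B C P s : ℝ} (hA : A < 0) (hB : 0 < B) (hC : 0 < C)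
    (hP : 0 < P) (hrel : 2*C*P^2 - B*P + 3*A = 0) (h6 : 0 ≤ 6*C*P - 2*B) (hs : 0 ≤ s) :
    3*C*P^4 - 2*B*P^3 + 9*A*P^2 ≤ 3*C*s^4 - 2*B*s^3 + 9*A*s^2 ∧
    (3*C*s^4 - 2*B*s^3 + 9*A*s^2 = 3*C*P^4 - 2*B*P^3 + 9*A*P^2 → s = P) := by
  have hq : 0 < 3*C*s^2 + (6*C*P-2*B)*s + (B*P-9*A)/2 := by
    have h1 : 0 ≤ 3*C*s^2 := by positivity
    have h2 : 0 ≤ (6*C*P-2*B)*s := mul_nonneg h6 hs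
    nlinarith [mul_pos hB hP]
  have hid : 3*C*s^4 - 2*B*s^3 + 9*A*s^2 - (3*C*P^4 - 2*B*P^3 + 9*A*P^2)
      = (s-P)^2*(3*C*s^2 + (6*C*P-2*B)*s + (B*P-9*A)/2)
        + (2*C*P^2 - B*P + 3*A)*((9/2)*s^2 - 3*P*s - (3/2)*P^2) := by ring
  rw [hrel, zero_mul, add_zero] at hid
  constructor
  · nlinarith [mul_nonneg (sq_nonneg (s-P)) hq.le]
  · intro h
    by_contra hne
    have hne' : s - P ≠ 0 := sub_ne_zero.mpr hne
    have hsp : 0 < (s-P)^2 := by positivity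
    nlinarith [mul_pos hsp hq]

lemma splus_facts {A B C : ℝ} (hA : A < 0) (hB : 0 < B) (hC : 0 < C) :
    0 < (B + Real.sqrt (B ^ 2 + 24 * |A| * C))/(4*C) ∧
    2*C*((B + Real.sqrt (B ^ 2 + 24 * |A| * C))/(4*C))^2
      - B*((B + Real.sqrt (B ^ 2 + 24 * |A| * C))/(4*C)) + 3*A = 0 ∧
    0 ≤ 6*C*((B + Real.sqrt (B ^ 2 + 24 * |A| * C))/(4*C)) - 2*B := by
  set d := Real.sqrt (B ^ 2 + 24 * |A| * C) with hd
  have habs : |A| = -A := abs_of_neg hA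
  have hd0 : 0 ≤ d := Real.sqrt_nonneg _
  have hd2 : d^2 = B^2 - 24*A*C := by
    rw [hd, Real.sq_sqrt (by nlinarith [abs_of_neg hA] : (0:ℝ) ≤ B ^ 2 + 24 * |A| * C), habs]; ring
  have hdB : B < d := by nlinarith [mul_pos (mul_pos hB hC) hC, mul_pos hC (neg_pos.mpr hA)]
  refine ⟨by positivity, ?_, ?_⟩
  · field_simp
    linear_combination 2 * hd2
  · have h : 6*C*((B + d)/(4*C)) - 2*B = (3*d - B)/2 := by field_simp; ring
    rw [h]; linarith

lemma two_eq {P b c : ℝ} (h1 : b + c = -(2*P/3)) (h2 : b^2 + c^2 = 2*P^2/9) :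
    b = -(P/3) ∧ c = -(P/3) := by
  have key : (b+P/3)^2 + (c+P/3)^2 = 0 := by linear_combination h2 + (2*P/3)*h1
  have hb : (b+P/3)^2 = 0 := by nlinarith [sq_nonneg (b+P/3), sq_nonneg (c+P/3)]
  have hc : (c+P/3)^2 = 0 := by nlinarith [sq_nonneg (b+P/3), sq_nonneg (c+P/3)]
  constructor
  · have := pow_eq_zero_iff (n := 2) (by norm_num) |>.mp hb; linarith
  · have := pow_eq_zero_iff (n := 2) (by norm_num) |>.mp hc; linarith

lemma triple {P a b c : ℝ} (h1 : a+b+c = 0) (h2 : a^2+b^2+c^2 = 2*P^2/3) (h3 : a^3+b^3+c^3 = 2*P^3/9) :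
    (a = 2*P/3 ∧ b = -(P/3) ∧ c = -(P/3)) ∨ (b = 2*P/3 ∧ a = -(P/3) ∧ c = -(P/3)) ∨
    (c = 2*P/3 ∧ a = -(P/3) ∧ b = -(P/3)) := by
  have hz : (a - 2*P/3)*((b - 2*P/3)*(c - 2*P/3)) = 0 := by
    linear_combination (((a+b+c)^2 - 3*(a^2+b^2+c^2))/6 - (P/3)*(a+b+c) + 4*P^2/9) * h1
      + (P/3) * h2 + (1/3) * h3
  rcases mul_eq_zero.mp hz with h | h
  · exact Or.inl ⟨by linarith, two_eq (by linarith) (by linear_combination h2 - (a + 2*P/3) * h)⟩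
  rcases mul_eq_zero.mp h with h | h
  · exact Or.inr (Or.inl ⟨by linarith,
      two_eq (by linarith) (by linear_combination h2 - (b + 2*P/3) * h)⟩)
  · exact Or.inr (Or.inr ⟨by linarith,
      two_eq (by linarith) (by linear_combination h2 - (c + 2*P/3) * h)⟩)

lemma scalar_core {A B C P r t : ℝ} (hA : A < 0) (hB : 0 < B) (hC : 0 < C)
    (hP : 0 < P) (hrel : 2*C*P^2 - B*P + 3*A = 0) (h6 : 0 ≤ 6*C*P - 2*B)
    (hr0 : 0 ≤ r) (ht2 : t^2 ≤ r^3/6) :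
    (3*C*P^4 - 2*B*P^3 + 9*A*P^2)/27 ≤ A/2*r - B/3*t + C/4*r^2 ∧
    (A/2*r - B/3*t + C/4*r^2 = (3*C*P^4 - 2*B*P^3 + 9*A*P^2)/27 →
      r = 2*P^2/3 ∧ t = 2*P^3/9) := by
  obtain ⟨s, hs0, hs2⟩ : ∃ s : ℝ, 0 ≤ s ∧ s^2 = 3*r/2 :=
    ⟨Real.sqrt (3*r/2), Real.sqrt_nonneg _, Real.sq_sqrt (by linarith)⟩
  have hrs : r = 2*s^2/3 := by rw [hs2]; ring
  have hK : (0:ℝ) ≤ 2*s^3/9 := by positivity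
  have hr3 : r^3/6 = (2*s^3/9)^2 := by rw [hrs]; ring
  have htle : t ≤ 2*s^3/9 := by nlinarith [ht2, hK, hr3]
  have hchain1 : (3*C*s^4 - 2*B*s^3 + 9*A*s^2)/27 ≤ A/2*r - B/3*t + C/4*r^2 := by
    rw [hrs]
    nlinarith [mul_nonneg hB.le (by linarith : (0:ℝ) ≤ 2*s^3/9 - t)]
  obtain ⟨hq1, hq2⟩ := quartic_le hA hB hC hP hrel h6 hs0
  refine ⟨by linarith, ?_⟩
  intro heq
  have hseq : 3*C*s^4 - 2*B*s^3 + 9*A*s^2 = 3*C*P^4 - 2*B*P^3 + 9*A*P^2 := by linarith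
  have hsP : s = P := hq2 hseq
  have hfb' : A/2*r - B/3*t + C/4*r^2 = (3*C*s^4 - 2*B*s^3 + 9*A*s^2)/27 := by linarith
  have hteq : t = 2*s^3/9 := by
    rw [hrs] at hfb'
    have hBt : B * (2*s^3/9 - t) = 0 := by linear_combination 3 * hfb'
    rcases mul_eq_zero.mp hBt with h | h
    · exact absurd h (ne_of_gt hB)
    · linarith
  constructor
  · rw [hrs, hsP]
  · rw [hteq, hsP]

lemma scalar_main {A B C P a b c : ℝ} (hA : A < 0) (hB : 0 < B) (hC : 0 < C)
    (hP : 0 < P) (hrel : 2*C*P^2 - B*P + 3*A = 0) (h6 : 0 ≤ 6*C*P - 2*B)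
    (h1 : a + b + c = 0) :
    (3*C*P^4 - 2*B*P^3 + 9*A*P^2)/27
      ≤ A/2*(a^2+b^2+c^2) - B/3*(a^3+b^3+c^3) + C/4*(a^2+b^2+c^2)^2 ∧
    (A/2*(a^2+b^2+c^2) - B/3*(a^3+b^3+c^3) + C/4*(a^2+b^2+c^2)^2
        = (3*C*P^4 - 2*B*P^3 + 9*A*P^2)/27 →
      a^2+b^2+c^2 = 2*P^2/3 ∧ a^3+b^3+c^3 = 2*P^3/9) := by
  have hc2 : c = -a - b := by linarith
  have hr0 : (0:ℝ) ≤ a^2+b^2+c^2 := by positivity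
  have hkey : (a^2+b^2+c^2)^3/6 - (a^3+b^3+c^3)^2 = (1/3)*((a-b)*(b-c)*(c-a))^2 := by
    rw [hc2]; ring
  have ht2 : (a^3+b^3+c^3)^2 ≤ (a^2+b^2+c^2)^3/6 := by
    have := sq_nonneg ((a-b)*(b-c)*(c-a)); linarith
  exact scalar_core hA hB hC hP hrel h6 hr0 ht2

lemma main_bound {A B C P : ℝ} (hA : A < 0) (hB : 0 < B) (hC : 0 < C)
    (hP : 0 < P) (hrel : 2*C*P^2 - B*P + 3*A = 0) (h6 : 0 ≤ 6*C*P - 2*B)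
    (Q : Mat3) (hQ : S0 Q) :
    (3*C*P^4 - 2*B*P^3 + 9*A*P^2)/27 ≤ fB A B C Q ∧
    (fB A B C Q = (3*C*P^4 - 2*B*P^3 + 9*A*P^2)/27 → ∃ n, unitVec n ∧ Q = uni P n) := by
  have hH : Q.IsHermitian := by
    rw [Matrix.IsHermitian, Matrix.conjTranspose_eq_transpose_of_trivial]; exact hQ.1
  obtain ⟨htr, hr, ht⟩ := trace_sums hH
  have h1 : hH.eigenvalues 0 + hH.eigenvalues 1 + hH.eigenvalues 2 = 0 := by
    rw [← htr]; exact hQ.2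
  have hfb : fB A B C Q
      = A/2*(hH.eigenvalues 0^2 + hH.eigenvalues 1^2 + hH.eigenvalues 2^2)
        - B/3*(hH.eigenvalues 0^3 + hH.eigenvalues 1^3 + hH.eigenvalues 2^3)
        + C/4*(hH.eigenvalues 0^2 + hH.eigenvalues 1^2 + hH.eigenvalues 2^2)^2 := by
    rw [fB, hr, ht]
  obtain ⟨hlow, heqc⟩ := scalar_main hA hB hC hP hrel h6 h1
  rw [← hfb] at hlow heqc
  refine ⟨hlow, ?_⟩
  intro heq
  obtain ⟨hrP, htP⟩ := heqc heq
  rcases triple h1 hrP htP with ⟨ha, hb, hc⟩ | ⟨ha, hb, hc⟩ | ⟨ha, hb, hc⟩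
  · exact reconstruct hH 0 ha (by intro j hj; fin_cases j <;> simp_all)
  · exact reconstruct hH 1 ha (by intro j hj; fin_cases j <;> simp_all)
  · exact reconstruct hH 2 ha (by intro j hj; fin_cases j <;> simp_all)

theorem stmt4 (A B C : ℝ) (hA : A < 0) (hB : 0 < B) (hC : 0 < C) :
    let splus : ℝ := (B + Real.sqrt (B ^ 2 + 24 * |A| * C)) / (4 * C)
    (∃ Q : Mat3, S0 Q ∧ ∀ P : Mat3, S0 P → fB A B C Q ≤ fB A B C P) ∧
    ∀ Q : Mat3, S0 Q →
      ((∀ P : Mat3, S0 P → fB A B C Q ≤ fB A B C P) ↔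
        ∃ n : Fin 3 → ℝ, unitVec n ∧ Q = uni splus n) := by
  intro splus
  have hsp : splus = (B + Real.sqrt (B ^ 2 + 24 * |A| * C)) / (4 * C) := rfl
  obtain ⟨hP, hrel, h6⟩ := splus_facts hA hB hC
  rw [← hsp] at hP hrel h6
  have hn0 : unitVec ![1,0,0] := by
    rw [unitVec, Fin.sum_univ_three]
    norm_num
    rfl
  have hS0 : S0 (uni splus ![1,0,0]) := uni_S0 splus hn0
  have hval : ∀ {n : Fin 3 → ℝ}, unitVec n →
      fB A B C (uni splus n) = (3*C*splus^4 - 2*B*splus^3 + 9*A*splus^2)/27 := by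
    intro n hn
    rw [fB, nsq_uni _ hn, tr3_uni _ hn]
    ring
  constructor
  · refine ⟨uni splus ![1,0,0], hS0, fun P' hP' => ?_⟩
    rw [hval hn0]
    exact (main_bound hA hB hC hP hrel h6 P' hP').1
  · intro Q hQ
    constructor
    · intro hmin
      have hle : fB A B C Q ≤ (3*C*splus^4 - 2*B*splus^3 + 9*A*splus^2)/27 := by
        have := hmin (uni splus ![1,0,0]) hS0
        rwa [hval hn0] at this
      have hge := (main_bound hA hB hC hP hrel h6 Q hQ).1
      exact (main_bound hA hB hC hP hrel h6 Q hQ).2 (le_antisymm hle hge)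
    · rintro ⟨n, hn, rfl⟩ P' hP'
      rw [hval hn]
      exact (main_bound hA hB hC hP hrel h6 P' hP').1
end
end

section
/- For every symmetric traceless real 3×3 matrix Q, the expression 1 + 3|Q|⁴ − 4√6·tr Q³ is nonnegative, with equality if and only if Q is uniaxial with |Q| = 1 and nonnegative scalar order parameter, i.e., Q = √(3/2)(n⊗n − I/3) for some unit vector n. -/
open Matrix

noncomputable section

/-! ### Auxiliary lemmas -/

lemma aux_sq_zero {x : ℝ} (h : x ^ 2 ≤ 0) : x = 0 :=
  pow_eq_zero_iff two_ne_zero |>.mp (le_antisymm h (sq_nonneg x))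

lemma aux_div_mul_div (p x y : ℝ) (hp : 0 < p) :
    (x / Real.sqrt p) * (y / Real.sqrt p) = (x*y)/p := by
  rw [div_mul_div_comm, Real.mul_self_sqrt hp.le]

lemma aux_sqrt_mul_div (p x : ℝ) (hp : 0 < p) : Real.sqrt p * (x / Real.sqrt p) = x := by
  rw [mul_div_assoc']
  rw [mul_comm, mul_div_assoc, div_self (by positivity : Real.sqrt p ≠ 0), mul_one]

lemma aux_scalar_key (a b c : ℝ) (h : a + b + c = 0) :
    0 ≤ 1 + 3*(a^2+b^2+c^2)^2 - 4*Real.sqrt 6*(a^3+b^3+c^3) ∧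
    (1 + 3*(a^2+b^2+c^2)^2 - 4*Real.sqrt 6*(a^3+b^3+c^3) = 0 →
      a^2+b^2+c^2 = 1 ∧ Real.sqrt 6 * (a^3+b^3+c^3) = 1) := by
  have hc : c = -a - b := by linarith
  subst hc
  set p : ℝ := a^2+b^2+(-a-b)^2 with hp
  set q : ℝ := a^3+b^3+(-a-b)^3 with hq
  have hp0 : 0 ≤ p := by positivity
  have hid : p^3 - 6*q^2 = 2*((a-b)*(a+2*b)*(-2*a-b))^2 := by rw [hp, hq]; ring
  have hdisc : 6*q^2 ≤ p^3 := by nlinarith [hid, sq_nonneg ((a-b)*(a+2*b)*(-2*a-b))]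
  set r : ℝ := Real.sqrt p with hr
  have hr0 : 0 ≤ r := Real.sqrt_nonneg p
  have hr2 : r^2 = p := Real.sq_sqrt hp0
  have h6 : Real.sqrt 6 ^ 2 = 6 := Real.sq_sqrt (by norm_num)
  have hkey : Real.sqrt 6 * q ≤ r^3 := by
    calc Real.sqrt 6 * q ≤ |Real.sqrt 6 * q| := le_abs_self _
    _ = Real.sqrt ((Real.sqrt 6 * q)^2) := (Real.sqrt_sq_eq_abs _).symm
    _ ≤ Real.sqrt ((r^3)^2) := Real.sqrt_le_sqrt
        (by rw [mul_pow, h6, show (r^3)^2 = (r^2)^3 from by ring, hr2]; exact hdisc)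
    _ = r^3 := Real.sqrt_sq (by positivity)
  have hfac : 0 ≤ (r-1)^2 * (3*r^2+2*r+1) :=
    mul_nonneg (sq_nonneg _) (by positivity)
  constructor
  · nlinarith [hfac, hkey, hr2]
  · intro he
    have hz1 : (r-1)^2 * (3*r^2+2*r+1) = 0 := by nlinarith [hfac, hkey, hr2]
    have hr1 : r = 1 := by
      have hpos : 0 < 3*r^2+2*r+1 := by positivity
      rcases mul_eq_zero.mp hz1 with h' | h'
      · have := pow_eq_zero_iff (n := 2) (by norm_num) |>.mp h'
        linarith
      · linarith
    have hp1 : p = 1 := by rw [← hr2, hr1]; norm_num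
    refine ⟨hp1, ?_⟩
    nlinarith [hkey, hr1, hp1, hr2]

lemma aux_eig_transfer (Q : Mat3) (hQ : Q.IsHermitian) :
    ∃ a b c : ℝ, a + b + c = Q.trace ∧
      a^2 + b^2 + c^2 = (Q*Q).trace ∧ a^3 + b^3 + c^3 = (Q*Q*Q).trace := by
  set V : Mat3 := (Matrix.IsHermitian.eigenvectorUnitary hQ : Mat3) with hV
  have hunit : star V * V = 1 :=
    (Matrix.mem_unitaryGroup_iff').mp (Matrix.IsHermitian.eigenvectorUnitary hQ).2
  have cancel : ∀ X : Mat3, star V * (V * X) = X := fun X => by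
    rw [← Matrix.mul_assoc, hunit, Matrix.one_mul]
  set d : Fin 3 → ℝ := RCLike.ofReal ∘ hQ.eigenvalues with hd
  set D : Mat3 := Matrix.diagonal d with hD
  have hspec : Q = V * D * star V := hQ.spectral_theorem
  have key : ∀ M : Mat3, (V * M * star V).trace = M.trace := by
    intro M
    rw [Matrix.trace_mul_cycle, hunit, Matrix.one_mul]
  have h2 : Q * Q = V * (D * D) * star V := by
    rw [hspec]; simp only [Matrix.mul_assoc, cancel]
  have h3 : Q * Q * Q = V * (D * D * D) * star V := by
    rw [h2, hspec]; simp only [Matrix.mul_assoc, cancel]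
  refine ⟨d 0, d 1, d 2, ?_, ?_, ?_⟩
  · rw [hspec, key, hD, Matrix.trace_diagonal, Fin.sum_univ_three]
  · rw [h2, key, hD, Matrix.diagonal_mul_diagonal, Matrix.trace_diagonal, Fin.sum_univ_three]
    ring
  · rw [h3, key, hD, Matrix.diagonal_mul_diagonal, Matrix.diagonal_mul_diagonal,
      Matrix.trace_diagonal, Fin.sum_univ_three]
    ring

lemma aux_CH3 (Q : Mat3) (hs : Q.IsSymm) (ht : Q.trace = 0) :
    Q * Q * Q = (nsq Q / 2) • Q + (tr3 Q / 3) • (1 : Mat3) := by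
  have h10 : Q 1 0 = Q 0 1 := hs.apply 0 1
  have h20 : Q 2 0 = Q 0 2 := hs.apply 0 2
  have h21 : Q 2 1 = Q 1 2 := hs.apply 1 2
  have h22 : Q 2 2 = -(Q 0 0 + Q 1 1) := by
    have := ht
    simp [Matrix.trace, Matrix.diag, Fin.sum_univ_three] at this
    linarith
  ext i j
  fin_cases i <;> fin_cases j <;>
    simp [nsq, tr3, Matrix.trace, Matrix.diag, Matrix.mul_apply, Fin.sum_univ_three,
      Matrix.one_apply, Matrix.smul_apply, Matrix.add_apply, h10, h20, h21, h22] <;> ring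

lemma aux_symm_sq_zero (B : Mat3) (hs : B.IsSymm) (h : B * B = 0) : B = 0 := by
  have key : ∀ i, B i 0 ^ 2 + B i 1 ^ 2 + B i 2 ^ 2 = 0 := by
    intro i
    have h1 : (B * B) i i = 0 := by rw [h]; simp
    have h2 : (B * B) i i = B i 0 * B 0 i + B i 1 * B 1 i + B i 2 * B 2 i := by
      simp [Matrix.mul_apply, Fin.sum_univ_three]
    rw [hs.apply i 0, hs.apply i 1, hs.apply i 2] at h2
    nlinarith [h1, h2]
  ext i j
  have := key i
  fin_cases j <;> simp <;>
    [exact aux_sq_zero (by nlinarith [sq_nonneg (B i 1), sq_nonneg (B i 2)]);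
     exact aux_sq_zero (by nlinarith [sq_nonneg (B i 0), sq_nonneg (B i 2)]);
     exact aux_sq_zero (by nlinarith [sq_nonneg (B i 0), sq_nonneg (B i 1)])]

lemma aux_build (a b c d e f : ℝ)
    (E00 : a*a+d*d+e*e = a) (E11 : d*d+b*b+f*f = b) (E22 : e*e+f*f+c*c = c)
    (E01 : a*d+d*b+e*f = d) (E02 : a*e+d*f+e*c = e) (E12 : d*e+b*f+f*c = f)
    (htr : a+b+c = 1) :
    ∃ n : Fin 3 → ℝ, (n 0^2 + n 1^2 + n 2^2 = 1) ∧
      n 0 * n 0 = a ∧ n 1 * n 1 = b ∧ n 2 * n 2 = c ∧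
      n 0 * n 1 = d ∧ n 0 * n 2 = e ∧ n 1 * n 2 = f := by
  have I1 : a*b - d*d = (a*b-d*d)^2 + (a*f-d*e)^2 + (d*f-b*e)^2 := by
    linear_combination (-b)*E00 + (-(a*a+d*d+e*e))*E11 + (a*d+d*b+e*f+d)*E01
  have I2 : a*c - e*e = (a*f-d*e)^2 + (a*c-e*e)^2 + (c*d-e*f)^2 := by
    linear_combination (-c)*E00 + (-(a*a+d*d+e*e))*E22 + (a*e+d*f+e*c+e)*E02
  have I3 : b*c - f*f = (d*f-b*e)^2 + (c*d-e*f)^2 + (b*c-f*f)^2 := by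
    linear_combination (-c)*E11 + (-(d*d+b*b+f*f))*E22 + (d*e+b*f+f*c+f)*E12
  have hsum : (a*b - d*d) + (a*c - e*e) + (b*c - f*f) = 0 := by
    linear_combination ((a+b+c)/2) * htr - (1/2)*E00 - (1/2)*E11 - (1/2)*E22
  have hD1 : 0 ≤ a*b - d*d := by rw [I1]; positivity
  have hD2 : 0 ≤ a*c - e*e := by rw [I2]; positivity
  have hD3 : 0 ≤ b*c - f*f := by rw [I3]; positivity
  have hD1z : d*d = a*b := by linarith
  have hD2z : e*e = a*c := by linarith
  have hD3z : f*f = b*c := by linarith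
  have hM1 : a*f - d*e = 0 := by
    apply aux_sq_zero; linarith [I1, sq_nonneg (a*b-d*d), sq_nonneg (d*f-b*e)]
  have hM2 : c*d - e*f = 0 := by
    apply aux_sq_zero; linarith [I2, sq_nonneg (a*c-e*e), sq_nonneg (a*f-d*e)]
  have hM3 : d*f - b*e = 0 := by
    apply aux_sq_zero; linarith [I3, sq_nonneg (b*c-f*f), sq_nonneg (c*d-e*f)]
  have ha0 : 0 ≤ a := by linarith [E00, mul_self_nonneg a, mul_self_nonneg d, mul_self_nonneg e]
  have hb0 : 0 ≤ b := by linarith [E11, mul_self_nonneg b, mul_self_nonneg d, mul_self_nonneg f]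
  have hc0 : 0 ≤ c := by linarith [E22, mul_self_nonneg c, mul_self_nonneg e, mul_self_nonneg f]
  have hcase : 0 < a ∨ 0 < b ∨ 0 < c := by
    by_contra hcon; push_neg at hcon; obtain ⟨h1, h2, h3⟩ := hcon; linarith
  rcases hcase with hp | hp | hp
  · refine ⟨![Real.sqrt a, d / Real.sqrt a, e / Real.sqrt a], ?_, ?_, ?_, ?_, ?_, ?_, ?_⟩
    · show Real.sqrt a ^2 + (d / Real.sqrt a)^2 + (e / Real.sqrt a)^2 = 1
      simp only [pow_two]
      rw [aux_div_mul_div a d d hp, aux_div_mul_div a e e hp, Real.mul_self_sqrt hp.le, hD1z, hD2z]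
      field_simp
      linear_combination htr
    · show Real.sqrt a * Real.sqrt a = a; exact Real.mul_self_sqrt hp.le
    · show (d / Real.sqrt a) * (d / Real.sqrt a) = b
      rw [aux_div_mul_div a d d hp, hD1z, mul_comm a b, mul_div_assoc, div_self hp.ne', mul_one]
    · show (e / Real.sqrt a) * (e / Real.sqrt a) = c
      rw [aux_div_mul_div a e e hp, hD2z, mul_comm a c, mul_div_assoc, div_self hp.ne', mul_one]
    · show Real.sqrt a * (d / Real.sqrt a) = d; exact aux_sqrt_mul_div a d hp
    · show Real.sqrt a * (e / Real.sqrt a) = e; exact aux_sqrt_mul_div a e hp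
    · show (d / Real.sqrt a) * (e / Real.sqrt a) = f
      rw [aux_div_mul_div a d e hp, show d*e = a*f by linarith, mul_comm a f,
        mul_div_assoc, div_self hp.ne', mul_one]
  · refine ⟨![d / Real.sqrt b, Real.sqrt b, f / Real.sqrt b], ?_, ?_, ?_, ?_, ?_, ?_, ?_⟩
    · show (d / Real.sqrt b)^2 + Real.sqrt b ^2 + (f / Real.sqrt b)^2 = 1
      simp only [pow_two]
      rw [aux_div_mul_div b d d hp, aux_div_mul_div b f f hp, Real.mul_self_sqrt hp.le, hD1z, hD3z]
      field_simp
      linear_combination htr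
    · show (d / Real.sqrt b) * (d / Real.sqrt b) = a
      rw [aux_div_mul_div b d d hp, hD1z, mul_div_assoc, div_self hp.ne', mul_one]
    · show Real.sqrt b * Real.sqrt b = b; exact Real.mul_self_sqrt hp.le
    · show (f / Real.sqrt b) * (f / Real.sqrt b) = c
      rw [aux_div_mul_div b f f hp, hD3z, mul_comm b c, mul_div_assoc, div_self hp.ne', mul_one]
    · show (d / Real.sqrt b) * Real.sqrt b = d
      rw [mul_comm]; exact aux_sqrt_mul_div b d hp
    · show (d / Real.sqrt b) * (f / Real.sqrt b) = e
      rw [aux_div_mul_div b d f hp, show d*f = b*e by linarith, mul_comm b e,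
        mul_div_assoc, div_self hp.ne', mul_one]
    · show Real.sqrt b * (f / Real.sqrt b) = f; exact aux_sqrt_mul_div b f hp
  · refine ⟨![e / Real.sqrt c, f / Real.sqrt c, Real.sqrt c], ?_, ?_, ?_, ?_, ?_, ?_, ?_⟩
    · show (e / Real.sqrt c)^2 + (f / Real.sqrt c)^2 + Real.sqrt c ^2 = 1
      simp only [pow_two]
      rw [aux_div_mul_div c e e hp, aux_div_mul_div c f f hp, Real.mul_self_sqrt hp.le, hD2z, hD3z]
      field_simp
      linear_combination htr
    · show (e / Real.sqrt c) * (e / Real.sqrt c) = a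
      rw [aux_div_mul_div c e e hp, hD2z, mul_div_assoc, div_self hp.ne', mul_one]
    · show (f / Real.sqrt c) * (f / Real.sqrt c) = b
      rw [aux_div_mul_div c f f hp, hD3z, mul_div_assoc, div_self hp.ne', mul_one]
    · show Real.sqrt c * Real.sqrt c = c; exact Real.mul_self_sqrt hp.le
    · show (e / Real.sqrt c) * (f / Real.sqrt c) = d
      rw [aux_div_mul_div c e f hp, show e*f = c*d by linarith, mul_comm c d, mul_div_assoc,
        div_self hp.ne', mul_one]
    · show (e / Real.sqrt c) * Real.sqrt c = e
      rw [mul_comm]; exact aux_sqrt_mul_div c e hp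
    · show (f / Real.sqrt c) * Real.sqrt c = f
      rw [mul_comm]; exact aux_sqrt_mul_div c f hp

lemma aux_rank_one (P : Mat3) (hs : P.IsSymm) (hid : P * P = P) (htr : P.trace = 1) :
    ∃ n : Fin 3 → ℝ, (∑ i, n i ^ 2 = 1) ∧ P = Matrix.vecMulVec n n := by
  have h10 : P 1 0 = P 0 1 := hs.apply 0 1
  have h20 : P 2 0 = P 0 2 := hs.apply 0 2
  have h21 : P 2 1 = P 1 2 := hs.apply 1 2
  have E : ∀ i j, (P * P) i j = P i j := fun i j => by rw [hid]
  have E00 := E 0 0; have E11 := E 1 1; have E22 := E 2 2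
  have E01 := E 0 1; have E02 := E 0 2; have E12 := E 1 2
  simp only [Matrix.mul_apply, Fin.sum_univ_three, h10, h20, h21] at E00 E11 E22 E01 E02 E12
  have htr' : P 0 0 + P 1 1 + P 2 2 = 1 := by
    simpa [Matrix.trace, Matrix.diag, Fin.sum_univ_three] using htr
  obtain ⟨n, hn1, h00, h11, h22, h01, h02, h12⟩ :=
    aux_build (P 0 0) (P 1 1) (P 2 2) (P 0 1) (P 0 2) (P 1 2) E00 E11 E22 E01 E02 E12 htr'
  refine ⟨n, by rw [Fin.sum_univ_three]; exact hn1, ?_⟩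
  ext i j
  fin_cases i <;> fin_cases j <;>
    simp only [Matrix.vecMulVec_apply, Fin.isValue] <;>
    first
      | exact h00.symm | exact h11.symm | exact h22.symm
      | exact h01.symm | exact h02.symm | exact h12.symm
      | exact (h10.trans h01.symm).trans (mul_comm (n 0) (n 1))
      | exact (h20.trans h02.symm).trans (mul_comm (n 0) (n 2))
      | exact (h21.trans h12.symm).trans (mul_comm (n 1) (n 2))

lemma aux_uni_vals (n : Fin 3 → ℝ) (hn : n 0^2 + n 1^2 + n 2^2 = 1) :
    nsq (uni (Real.sqrt (3/2)) n) = 1 ∧ Real.sqrt 6 * tr3 (uni (Real.sqrt (3/2)) n) = 1 := by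
  set s : ℝ := Real.sqrt (3/2) with hsdef
  have hs2 : s ^ 2 = 3/2 := Real.sq_sqrt (by norm_num)
  have hts : Real.sqrt 6 * s = 3 := by
    rw [hsdef, ← Real.sqrt_mul (by norm_num : (0:ℝ) ≤ 6),
      show (6:ℝ) * (3/2) = 3^2 by norm_num, Real.sqrt_sq (by norm_num : (0:ℝ) ≤ 3)]
  constructor
  · simp only [nsq, uni, Matrix.trace, Matrix.diag, Matrix.mul_apply, Fin.sum_univ_three,
      Matrix.smul_apply, Matrix.sub_apply, Matrix.vecMulVec_apply, Matrix.one_apply,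
      smul_eq_mul, Fin.isValue, if_true, one_ne_zero, if_false]
    norm_num [Fin.ext_iff]
    linear_combination (s^2*((n 0^2+n 1^2+n 2^2)+1/3))*hn + (2/3)*hs2
  · simp only [tr3, uni, Matrix.trace, Matrix.diag, Matrix.mul_apply, Fin.sum_univ_three,
      Matrix.smul_apply, Matrix.sub_apply, Matrix.vecMulVec_apply, Matrix.one_apply,
      smul_eq_mul, Fin.isValue, if_true, one_ne_zero, if_false]
    norm_num [Fin.ext_iff]
    linear_combination
      (s^2*((n 0^2+n 1^2+n 2^2)^3-(n 0^2+n 1^2+n 2^2)^2+(n 0^2+n 1^2+n 2^2)/3-1/9))*hts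
      + (3*((n 0^2+n 1^2+n 2^2)^3-(n 0^2+n 1^2+n 2^2)^2+(n 0^2+n 1^2+n 2^2)/3-1/9))*hs2
      + (9/2*((n 0^2+n 1^2+n 2^2)^2+1/3))*hn

lemma aux_B_sq (Q : Mat3) (hCH : Q*Q*Q = (1/2:ℝ) • Q + (Real.sqrt 6/18) • (1:Mat3)) :
    (Q*Q - (Real.sqrt 6/6) • Q - (1/3:ℝ) • (1:Mat3)) *
      (Q*Q - (Real.sqrt 6/6) • Q - (1/3:ℝ) • (1:Mat3)) = 0 := by
  have h6 : Real.sqrt 6 * Real.sqrt 6 = 6 := Real.mul_self_sqrt (by norm_num)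
  have h4 : Q*Q*(Q*Q) = (1/2:ℝ)•(Q*Q) + (Real.sqrt 6/18)•Q := by
    rw [← Matrix.mul_assoc, hCH, add_mul, smul_mul_assoc, smul_mul_assoc, Matrix.one_mul]
  simp only [sub_mul, mul_sub, smul_mul_assoc, mul_smul_comm, smul_smul,
    Matrix.one_mul, Matrix.mul_one, ← Matrix.mul_assoc]
  rw [show Q*Q*Q*Q = Q*Q*(Q*Q) from by rw [Matrix.mul_assoc], h4, hCH]
  match_scalars <;> field_simp <;> nlinarith [h6]

lemma aux_P_idem (Q : Mat3) (hB0 : Q*Q = (Real.sqrt 6/6) • Q + (1/3:ℝ) • (1:Mat3)) :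
    ((Real.sqrt 6/3) • Q + (1/3:ℝ) • (1:Mat3)) * ((Real.sqrt 6/3) • Q + (1/3:ℝ) • (1:Mat3))
      = (Real.sqrt 6/3) • Q + (1/3:ℝ) • (1:Mat3) := by
  have h6 : Real.sqrt 6 * Real.sqrt 6 = 6 := Real.mul_self_sqrt (by norm_num)
  simp only [add_mul, mul_add, smul_mul_assoc, mul_smul_comm, smul_smul,
    Matrix.one_mul, Matrix.mul_one]
  rw [hB0]
  match_scalars <;> field_simp <;> nlinarith [h6]

theorem stmt7 (Q : Mat3) (hQ : S0 Q) :
    0 ≤ 1 + 3 * (nsq Q) ^ 2 - 4 * Real.sqrt 6 * tr3 Q ∧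
    (1 + 3 * (nsq Q) ^ 2 - 4 * Real.sqrt 6 * tr3 Q = 0 ↔
      ∃ n : Fin 3 → ℝ, unitVec n ∧ Q = uni (Real.sqrt (3 / 2)) n) := by
  obtain ⟨hsym, htrz⟩ := hQ
  have hherm : Q.IsHermitian := by
    show Qᴴ = Q
    rw [Matrix.conjTranspose_eq_transpose_of_trivial]
    exact hsym
  obtain ⟨a, b, c, habc, hab2, hab3⟩ := aux_eig_transfer Q hherm
  have key := aux_scalar_key a b c (by rw [habc, htrz])
  rw [hab2, hab3] at key
  have h6 : Real.sqrt 6 * Real.sqrt 6 = 6 := Real.mul_self_sqrt (by norm_num)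
  have keyn : 0 ≤ 1 + 3 * (nsq Q) ^ 2 - 4 * Real.sqrt 6 * tr3 Q := by
    simp only [nsq, tr3]
    exact key.1
  refine ⟨keyn, ?_, ?_⟩
  · -- equality → uniaxial
    intro h0
    simp only [nsq, tr3] at h0
    obtain ⟨hp1, hq1⟩ := key.2 h0
    have hp1' : nsq Q = 1 := hp1
    have hq1' : Real.sqrt 6 * tr3 Q = 1 := hq1
    have htr3 : tr3 Q = Real.sqrt 6 / 6 := by
      linear_combination (Real.sqrt 6 / 6) * hq1' - (tr3 Q / 6) * h6
    have hCH : Q*Q*Q = (1/2:ℝ) • Q + (Real.sqrt 6/18) • (1:Mat3) := by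
      rw [aux_CH3 Q hsym htrz, hp1', htr3,
        show ((1:ℝ)/2) = (1/2:ℝ) by norm_num,
        show (Real.sqrt 6/6)/3 = Real.sqrt 6/18 by ring]
    have hB2 := aux_B_sq Q hCH
    have hBsymm : (Q*Q - (Real.sqrt 6/6) • Q - (1/3:ℝ) • (1:Mat3)).IsSymm := by
      show _ᵀ = _
      simp only [Matrix.transpose_sub, Matrix.transpose_smul, Matrix.transpose_mul,
        Matrix.transpose_one, hsym.eq]
    have hB0 := aux_symm_sq_zero _ hBsymm hB2
    rw [sub_sub, sub_eq_zero] at hB0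
    have hPP : ((Real.sqrt 6/3) • Q + (1/3:ℝ) • (1:Mat3)) * ((Real.sqrt 6/3) • Q + (1/3:ℝ) • (1:Mat3))
        = (Real.sqrt 6/3) • Q + (1/3:ℝ) • (1:Mat3) := by
      exact aux_P_idem Q hB0
    have hPsym : ((Real.sqrt 6/3) • Q + (1/3:ℝ) • (1:Mat3)).IsSymm := by
      show _ᵀ = _
      simp only [Matrix.transpose_add, Matrix.transpose_smul, Matrix.transpose_one, hsym.eq]
    have hPtr : ((Real.sqrt 6/3) • Q + (1/3:ℝ) • (1:Mat3)).trace = 1 := by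
      rw [Matrix.trace_add, Matrix.trace_smul, Matrix.trace_smul, htrz, Matrix.trace_one]
      norm_num
    obtain ⟨n, hn1, hPn⟩ := aux_rank_one _ hPsym hPP hPtr
    refine ⟨n, hn1, ?_⟩
    have hs32 : Real.sqrt (3/2) = Real.sqrt 6 / 2 := by
      rw [show (3/2:ℝ) = 6 * (1/2)^2 by norm_num,
        Real.sqrt_mul (by norm_num : (0:ℝ) ≤ 6), Real.sqrt_sq (by norm_num : (0:ℝ) ≤ 1/2)]
      ring
    have hvv : Matrix.vecMulVec n n - (1/3:ℝ) • (1:Mat3) = (Real.sqrt 6/3) • Q := by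
      rw [← hPn, add_sub_cancel_right]
    rw [uni, hs32, show ((1:ℝ)/3) = (1/3:ℝ) by norm_num, hvv, smul_smul,
      div_mul_div_comm, h6, show ((6:ℝ)/(2*3)) = 1 by norm_num, one_smul]
  · -- uniaxial → equality
    rintro ⟨n, hn, rfl⟩
    rw [unitVec, Fin.sum_univ_three] at hn
    obtain ⟨h1, h2⟩ := aux_uni_vals n hn
    linear_combination (3*(nsq (uni (Real.sqrt (3/2)) n) + 1))*h1 - 4*h2
end
end

section
/- If Q ∈ S₀ is uniaxial with nonnegative scalar order parameter, Q = s(n⊗n − I/3) with s ≥ 0, then √6·tr Q³ = |Q|³ and β²(Q) = 0; conversely, if Q ≠ 0 satisfies √6·tr Q³ = |Q|³, then Q is uniaxial with positive scalar order parameter. -/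
open Matrix

noncomputable section

lemma cube_identity (a b c : ℝ) (h : a + b + c = 0) :
    (a^2+b^2+c^2)^3 - 6*(a^3+b^3+c^3)^2 = 2*((a-b)*(b-c)*(c-a))^2 := by
  have hc : c = -a - b := by linarith
  subst hc; ring

lemma keylem (U : Mat3) (hU : U ∈ Matrix.unitaryGroup (Fin 3) ℝ)
    (lam : Fin 3 → ℝ) (s : ℝ) (k : Fin 3)
    (h : ∀ i, lam i = s * ((if i = k then 1 else 0) - 1/3)) :
    unitVec (fun i => U i k) ∧
      U * Matrix.diagonal lam * star U = uni s (fun i => U i k) := by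
  have hVU : star U * U = 1 := Matrix.mem_unitaryGroup_iff'.mp hU
  have hUV : U * star U = 1 := Matrix.mem_unitaryGroup_iff.mp hU
  constructor
  · have := congrArg (fun M => M k k) hVU
    simp only [Matrix.mul_apply, Matrix.one_apply_eq, Matrix.star_apply, star_trivial] at this
    simpa [unitVec, sq] using this
  · have hd : Matrix.diagonal lam
        = s • (Matrix.diagonal (fun i => if i = k then (1:ℝ) else 0) - (1/3 : ℝ) • 1) := by
      ext i j
      by_cases hij : i = j
      · subst hij; simp [Matrix.diagonal_apply_eq, h i]
      · simp [Matrix.diagonal_apply_ne _ hij, Matrix.one_apply_ne hij]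
    have hproj : U * Matrix.diagonal (fun i => if i = k then (1:ℝ) else 0) * star U
        = Matrix.vecMulVec (fun i => U i k) (fun i => U i k) := by
      ext i j
      simp only [Matrix.mul_apply, Matrix.diagonal_apply, Matrix.vecMulVec_apply,
        Matrix.star_apply, star_trivial]
      simp [mul_ite, mul_zero, ite_mul, zero_mul, Finset.sum_ite_eq', Finset.sum_ite_eq]
    rw [hd, Matrix.mul_smul, Matrix.smul_mul, uni]
    congr 1
    rw [Matrix.mul_sub, Matrix.sub_mul, hproj, Matrix.mul_smul, Matrix.mul_one,
      Matrix.smul_mul, hUV]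

theorem stmt18 (Q : Mat3) (hQ : S0 Q) :
    ((∃ (s : ℝ) (n : Fin 3 → ℝ), 0 ≤ s ∧ unitVec n ∧ Q = uni s n) →
      Real.sqrt 6 * tr3 Q = (normQ Q) ^ 3 ∧ (Q ≠ 0 → betaSq Q = 0)) ∧
    (Q ≠ 0 → Real.sqrt 6 * tr3 Q = (normQ Q) ^ 3 →
      ∃ (s : ℝ) (n : Fin 3 → ℝ), 0 < s ∧ unitVec n ∧ Q = uni s n) := by
  constructor
  · rintro ⟨s, n, hs, hn, rfl⟩
    have h2 := uni_nsq s n hn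
    have h3 := uni_tr3 s n hn
    have hnorm : normQ (uni s n) = Real.sqrt (2/3) * s := by
      rw [normQ, h2, Real.sqrt_mul (by norm_num), Real.sqrt_sq hs]
    have h23 : Real.sqrt (2/3) ^ 2 = 2/3 := Real.sq_sqrt (by norm_num)
    have hs6 : Real.sqrt 6 = 3 * Real.sqrt (2/3) := by
      rw [show (6:ℝ) = 3^2*(2/3) by norm_num, Real.sqrt_mul (by positivity),
        Real.sqrt_sq (by norm_num)]
    constructor
    · rw [h3, hnorm, hs6]
      linear_combination (-(Real.sqrt (2/3) * s^3)) * h23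
    · intro hQ0
      have hs0 : s ≠ 0 := by
        rintro rfl
        exact hQ0 (by simp [uni])
      rw [betaSq, h3, h2]
      field_simp
      ring
  · intro hQ0 heq
    have hH : Q.IsHermitian := by
      rw [Matrix.IsHermitian, Matrix.conjTranspose_eq_transpose_of_trivial]
      exact hQ.1
    set U : Mat3 := (hH.eigenvectorUnitary : Mat3) with hUdef
    have hUmem : U ∈ Matrix.unitaryGroup (Fin 3) ℝ := (hH.eigenvectorUnitary).2
    set lam := hH.eigenvalues with hlam
    have hspec : Q = U * Matrix.diagonal lam * star U := by
      simpa using hH.spectral_theorem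
    have hVU : star U * U = 1 := Matrix.mem_unitaryGroup_iff'.mp hUmem
    have htr : ∀ M : Mat3, (U * M * star U).trace = M.trace := by
      intro M
      rw [Matrix.trace_mul_cycle, hVU, Matrix.one_mul]
    have key : ∀ A B : Mat3, (U * A * star U) * (U * B * star U) = U * (A * B) * star U := by
      intro A B
      simp only [Matrix.mul_assoc]
      rw [← Matrix.mul_assoc (star U) U, hVU, Matrix.one_mul]
    set a := lam 0 with ha
    set b := lam 1 with hb
    set c := lam 2 with hc
    have habc : a + b + c = 0 := by
      have h1 : Q.trace = a + b + c := by
        rw [hspec, htr, Matrix.trace_diagonal, Fin.sum_univ_three]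
      rw [← h1, hQ.2]
    have hQQ : Q * Q = U * (Matrix.diagonal fun i => lam i * lam i) * star U := by
      rw [hspec, key, Matrix.diagonal_mul_diagonal]
    have h2 : nsq Q = a ^ 2 + b ^ 2 + c ^ 2 := by
      show (Q * Q).trace = _
      rw [hQQ, htr, Matrix.trace_diagonal, Fin.sum_univ_three]
      ring
    have h3 : tr3 Q = a ^ 3 + b ^ 3 + c ^ 3 := by
      show (Q * Q * Q).trace = _
      rw [hQQ, hspec, key, Matrix.diagonal_mul_diagonal, htr, Matrix.trace_diagonal,
        Fin.sum_univ_three]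
      ring
    have hpnn : 0 ≤ nsq Q := by rw [h2]; positivity
    have hppos : 0 < nsq Q := by
      rcases hpnn.lt_or_eq with h | h
      · exact h
      · exfalso
        apply hQ0
        have hsum : a ^ 2 + b ^ 2 + c ^ 2 = 0 := by rw [← h2, ← h]
        have ha0 : a = 0 := by nlinarith [sq_nonneg a, sq_nonneg b, sq_nonneg c]
        have hb0 : b = 0 := by nlinarith [sq_nonneg a, sq_nonneg b, sq_nonneg c]
        have hc0 : c = 0 := by nlinarith [sq_nonneg a, sq_nonneg b, sq_nonneg c]
        have hl0 : lam = 0 := by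
          funext i
          fin_cases i
          · exact ha0
          · exact hb0
          · exact hc0
        rw [hspec, hl0, show Matrix.diagonal (0 : Fin 3 → ℝ) = 0 from Matrix.diagonal_zero,
          Matrix.mul_zero, Matrix.zero_mul]
    have hnn : (normQ Q)^2 = nsq Q := Real.sq_sqrt hpnn
    have hsq : 6 * (tr3 Q)^2 = (nsq Q)^3 := by
      have h6 : (Real.sqrt 6)^2 = 6 := Real.sq_sqrt (by norm_num)
      calc 6 * (tr3 Q)^2 = (Real.sqrt 6 * tr3 Q)^2 := by rw [mul_pow, h6]
        _ = ((normQ Q)^3)^2 := by rw [heq]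
        _ = ((normQ Q)^2)^3 := by ring
        _ = (nsq Q)^3 := by rw [hnn]
    have htnn : 0 ≤ tr3 Q := by
      have h1 : 0 ≤ (normQ Q)^3 := pow_nonneg (Real.sqrt_nonneg _) 3
      have h2' : (0:ℝ) < Real.sqrt 6 := Real.sqrt_pos.mpr (by norm_num)
      nlinarith [heq]
    rw [h2, h3] at hsq
    rw [h3] at htnn
    have hp2 : 0 < a ^ 2 + b ^ 2 + c ^ 2 := by rwa [h2] at hppos
    -- discard heavy matrix facts before doing real arithmetic
    clear_value U lam a b c
    clear hUdef hlam htr key hQQ h2 h3 hnn hpnn hppos hQ hQ0 heq hVU hH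
    have hfac : (a-b)*(b-c)*(c-a) = 0 := by
      have hid := cube_identity a b c habc
      have hz : ((a-b)*(b-c)*(c-a))^2 = 0 := by linarith
      exact pow_eq_zero_iff (by norm_num) |>.mp hz
    rcases mul_eq_zero.mp hfac with h | hca
    · rcases mul_eq_zero.mp h with hab | hbc
      · -- a = b, distinct index 2, s = -3a
        have hab' : b = a := by linarith [sub_eq_zero.mp hab]
        have hc2 : c = -2*a := by linarith
        have hale : a ≤ 0 := by
          by_contra h'
          push_neg at h'
          rw [hab', hc2] at htnn
          nlinarith [mul_pos (mul_pos h' h') h']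
        have haneg : a < 0 := by
          rcases hale.lt_or_eq with h' | h'
          · exact h'
          · exfalso
            rw [h', hab', h', hc2, h'] at hp2
            norm_num at hp2
        have e0 : lam 0 = -3*a * ((if (0:Fin 3) = (2:Fin 3) then 1 else 0) - 1/3) := by
          rw [if_neg (by decide), ← ha]; ring
        have e1 : lam 1 = -3*a * ((if (1:Fin 3) = (2:Fin 3) then 1 else 0) - 1/3) := by
          rw [if_neg (by decide), ← hb]; linarith
        have e2 : lam 2 = -3*a * ((if (2:Fin 3) = (2:Fin 3) then 1 else 0) - 1/3) := by
          rw [if_pos rfl, ← hc]; linarith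
        have hkey := keylem U hUmem lam (-3*a) 2 (by
          intro i
          fin_cases i
          · exact e0
          · exact e1
          · exact e2)
        exact ⟨-3*a, fun i => U i 2, by linarith, hkey.1, by rw [hspec, hkey.2]⟩
      · -- b = c, distinct index 0, s = -3b
        have hbc' : c = b := by linarith [sub_eq_zero.mp hbc]
        have ha2 : a = -2*b := by linarith
        have hble : b ≤ 0 := by
          by_contra h'
          push_neg at h'
          rw [hbc', ha2] at htnn
          nlinarith [mul_pos (mul_pos h' h') h']
        have hbneg : b < 0 := by
          rcases hble.lt_or_eq with h' | h'
          · exact h'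
          · exfalso
            rw [h', hbc', h', ha2, h'] at hp2
            norm_num at hp2
        have e0 : lam 0 = -3*b * ((if (0:Fin 3) = (0:Fin 3) then 1 else 0) - 1/3) := by
          rw [if_pos rfl, ← ha]; linarith
        have e1 : lam 1 = -3*b * ((if (1:Fin 3) = (0:Fin 3) then 1 else 0) - 1/3) := by
          rw [if_neg (by decide), ← hb]; ring
        have e2 : lam 2 = -3*b * ((if (2:Fin 3) = (0:Fin 3) then 1 else 0) - 1/3) := by
          rw [if_neg (by decide), ← hc]; linarith
        have hkey := keylem U hUmem lam (-3*b) 0 (by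
          intro i
          fin_cases i
          · exact e0
          · exact e1
          · exact e2)
        exact ⟨-3*b, fun i => U i 0, by linarith, hkey.1, by rw [hspec, hkey.2]⟩
    · -- c = a, distinct index 1, s = -3a
      have hca' : c = a := by linarith [sub_eq_zero.mp hca]
      have hb2 : b = -2*a := by linarith
      have hale : a ≤ 0 := by
        by_contra h'
        push_neg at h'
        rw [hca', hb2] at htnn
        nlinarith [mul_pos (mul_pos h' h') h']
      have haneg : a < 0 := by
        rcases hale.lt_or_eq with h' | h'
        · exact h'
        · exfalso
          rw [h', hb2, h', hca', h'] at hp2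
          norm_num at hp2
      have e0 : lam 0 = -3*a * ((if (0:Fin 3) = (1:Fin 3) then 1 else 0) - 1/3) := by
        rw [if_neg (by decide), ← ha]; ring
      have e1 : lam 1 = -3*a * ((if (1:Fin 3) = (1:Fin 3) then 1 else 0) - 1/3) := by
        rw [if_pos rfl, ← hb]; linarith
      have e2 : lam 2 = -3*a * ((if (2:Fin 3) = (1:Fin 3) then 1 else 0) - 1/3) := by
        rw [if_neg (by decide), ← hc]; linarith
      have hkey := keylem U hUmem lam (-3*a) 1 (by
        intro i
        fin_cases i
        · exact e0
        · exact e1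
        · exact e2)
      exact ⟨-3*a, fun i => U i 1, by linarith, hkey.1, by rw [hspec, hkey.2]⟩
end
end
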